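/- For all sequences b and c of length k+1 over C_⊥ and every colour d ∈ C: if b = ↓₁c, then ↓₁ru'(b,d) = ↓₁ru'(c,d); that is, the concise raw update of the truncation of c equals the truncation of the classic raw update of c. -/

import Mathlib

open scoped Classical

/-- Membership in `C⁻`, where `C = {lo,…,hi}`: everything of `C` except `hi` when `hi` is odd. -/
def CminusMem (lo hi c : ℕ) : Prop := lo ≤ c ∧ c ≤ hi ∧ (Even hi ∨ c ≠ hi)

/-- The truncation `↓₁b`: for each odd colour, all occurrences other than the leftmost
(highest-index, among indices `≤ k`) one are replaced by `⊥`. -/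
noncomputable def trunc (k : ℕ) (b : ℕ → Option ℕ) : ℕ → Option ℕ := fun i =>
  match b i with
  | none => none
  | some o => if Odd o ∧ ∃ i', i < i' ∧ i' ≤ k ∧ b i' = some o then none else some o

/-- The classic raw update `ru'(b,d)` of a witness `b = b_k,…,b_0` over `C_⊥` (with
`C = {lo,…,hi}`) upon reading a vertex of colour `d`. -/
noncomputable def ruC (k hi : ℕ) (b : ℕ → Option ℕ) (d : ℕ) : ℕ → Option ℕ :=
  if Odd d ∧ d = hi then fun _ => none
  else if (Odd d ∧ ∀ i ≤ k, b i = none ∨ ∃ c, b i = some c ∧ d ≤ c)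
       ∨ (Even d ∧ ∀ i ≤ k, ∃ c, b i = some c ∧ Even c ∧ d ≤ c) then b
  else if Odd d then
    let j := Nat.findGreatest (fun j' => ∃ c, b j' = some c ∧ c < d) k
    fun i => if j < i then b i else if i = j ∧ j ≠ 0 then some d else none
  else
    let j0 := Nat.findGreatest (fun j' => ∃ c, b j' = some c ∧ c < d) k
    let j1 := if h : ∃ j', j' ≤ k ∧ ¬ ∃ c, b j' = some c ∧ Even c then Nat.find h else 0
    let j := max j0 j1
    fun i => if j < i then b i else if i = j then some d else none

lemma trunc_congr (k : ℕ) (f g : ℕ → Option ℕ)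
    (H1 : ∀ i ≤ k, ∀ a, f i = some a → g i = some a)
    (H3 : ∀ i ≤ k, ∀ a, Even a → g i = some a → f i = some a)
    (H2 : ∀ i ≤ k, ∀ a, Odd a → g i = some a →
        ∃ i', i ≤ i' ∧ i' ≤ k ∧ f i' = some a ∧ g i' = some a) :
    ∀ i ≤ k, trunc k f i = trunc k g i := by
  intro i hik
  rcases hg : g i with _ | a
  · have hf : f i = none := by
      rcases hf : f i with _ | a
      · rfl
      · have := H1 i hik a hf; rw [hg] at this; exact absurd this (by simp)
    simp [trunc, hf, hg]
  · rcases Nat.even_or_odd a with ha | ha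
    · have hf : f i = some a := H3 i hik a ha hg
      have hna : ¬ Odd a := by simpa [Nat.not_odd_iff_even] using ha
      simp [trunc, hf, hg, hna]
    · rcases hf : f i with _ | a'
      · obtain ⟨i', hii', hi'k, hfi', hgi'⟩ := H2 i hik a ha hg
        have hlt : i < i' := lt_of_le_of_ne hii' (by rintro rfl; rw [hf] at hfi'; exact absurd hfi' (by simp))
        simp only [trunc, hf, hg]
        rw [if_pos ⟨ha, i', hlt, hi'k, hgi'⟩]
      · have haa : a' = a := by
          have := H1 i hik a' hf; rw [hg] at this; exact (Option.some.inj this).symm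
        subst haa
        have hiff : (∃ i', i < i' ∧ i' ≤ k ∧ f i' = some a') ↔
            (∃ i', i < i' ∧ i' ≤ k ∧ g i' = some a') := by
          constructor
          · rintro ⟨i', h1', h2', h3'⟩; exact ⟨i', h1', h2', H1 i' h2' a' h3'⟩
          · rintro ⟨i', h1', h2', h3'⟩
            obtain ⟨i'', hii'', hi''k, hfi'', _⟩ := H2 i' h2' a' ha h3'
            exact ⟨i'', lt_of_lt_of_le h1' hii'', hi''k, hfi''⟩
        simp only [trunc, hf, hg, hiff]

/-- If `b = ↓₁c` (on the indices `0,…,k` of the sequences), then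
`↓₁ru'(b,d) = ↓₁ru'(c,d)`: the concise raw update of the truncation of `c` equals the
truncation of the classic raw update of `c`. -/
theorem trunc_ruC_eq (lo hi : ℕ) (hlo : lo = 1 ∨ lo = 2) (hlohi : lo ≤ hi) (k : ℕ)
    (c : ℕ → Option ℕ) (hc : ∀ i ≤ k, c i = none ∨ ∃ a, c i = some a ∧ CminusMem lo hi a)
    (b : ℕ → Option ℕ) (hbc : ∀ i ≤ k, b i = trunc k c i)
    (d : ℕ) (hd : d ∈ Set.Icc lo hi) :
    ∀ i ≤ k, trunc k (ruC k hi b d) i = trunc k (ruC k hi c d) i := by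
  -- basic facts relating b and c
  have B1 : ∀ i ≤ k, ∀ a, b i = some a → c i = some a := by
    intro i hik a hba
    rw [hbc i hik] at hba
    rcases hci : c i with _ | a'
    · simp [trunc, hci] at hba
    · simp only [trunc, hci] at hba
      split at hba
      · exact absurd hba (by simp)
      · exact hba
  have B3 : ∀ i ≤ k, ∀ a, Even a → c i = some a → b i = some a := by
    intro i hik a ha hca
    rw [hbc i hik]
    simp only [trunc, hca]
    rw [if_neg]
    rintro ⟨hodd, -⟩
    exact (Nat.not_odd_iff_even.mpr ha) hodd
  have B2 : ∀ i ≤ k, ∀ a, Odd a → c i = some a →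
      ∃ i', i ≤ i' ∧ i' ≤ k ∧ b i' = some a ∧ c i' = some a := by
    intro i hik a _ hca
    set m := Nat.findGreatest (fun i' => c i' = some a) k with hm
    have hPm : c m = some a := Nat.findGreatest_spec (P := fun i' => c i' = some a) hik hca
    have him : i ≤ m := Nat.le_findGreatest hik hca
    have hmk : m ≤ k := Nat.findGreatest_le k
    refine ⟨m, him, hmk, ?_, hPm⟩
    rw [hbc m hmk]
    simp only [trunc, hPm]
    rw [if_neg]
    rintro ⟨-, i', hmi', hi'k, hci'⟩
    exact Nat.findGreatest_is_greatest hmi' hi'k hci'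
  by_cases h1 : Odd d ∧ d = hi
  · intro i hik
    simp only [ruC, if_pos h1]
  · -- the "unchanged" conditions are equivalent for b and c
    have hAB : ((Odd d ∧ ∀ i ≤ k, b i = none ∨ ∃ a, b i = some a ∧ d ≤ a)
         ∨ (Even d ∧ ∀ i ≤ k, ∃ a, b i = some a ∧ Even a ∧ d ≤ a)) ↔
        ((Odd d ∧ ∀ i ≤ k, c i = none ∨ ∃ a, c i = some a ∧ d ≤ a)
         ∨ (Even d ∧ ∀ i ≤ k, ∃ a, c i = some a ∧ Even a ∧ d ≤ a)) := by
      constructor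
      · rintro (⟨hod, hA⟩ | ⟨hev, hB⟩)
        · left
          refine ⟨hod, fun i hik => ?_⟩
          rcases hci : c i with _ | a
          · exact Or.inl rfl
          · right
            refine ⟨a, rfl, ?_⟩
            rcases Nat.even_or_odd a with ha | ha
            · have hba := B3 i hik a ha hci
              rcases hA i hik with hn | ⟨a', he, hle⟩
              · rw [hba] at hn; exact absurd hn (by simp)
              · rw [hba] at he; rw [Option.some.inj he]; exact hle
            · obtain ⟨i', _, hi'k, hbi', _⟩ := B2 i hik a ha hci
              rcases hA i' hi'k with hn | ⟨a', he, hle⟩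
              · rw [hbi'] at hn; exact absurd hn (by simp)
              · rw [hbi'] at he; rw [Option.some.inj he]; exact hle
        · right
          refine ⟨hev, fun i hik => ?_⟩
          obtain ⟨a, hba, hea, hle⟩ := hB i hik
          exact ⟨a, B1 i hik a hba, hea, hle⟩
      · rintro (⟨hod, hA⟩ | ⟨hev, hB⟩)
        · left
          refine ⟨hod, fun i hik => ?_⟩
          rcases hbi : b i with _ | a
          · exact Or.inl rfl
          · right
            refine ⟨a, rfl, ?_⟩
            have hci := B1 i hik a hbi
            rcases hA i hik with hn | ⟨a', he, hle⟩
            · rw [hci] at hn; exact absurd hn (by simp)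
            · rw [hci] at he; rw [Option.some.inj he]; exact hle
        · right
          refine ⟨hev, fun i hik => ?_⟩
          obtain ⟨a, hca, hea, hle⟩ := hB i hik
          exact ⟨a, B3 i hik a hea hca, hea, hle⟩
    by_cases h2 : ((Odd d ∧ ∀ i ≤ k, c i = none ∨ ∃ a, c i = some a ∧ d ≤ a)
         ∨ (Even d ∧ ∀ i ≤ k, ∃ a, c i = some a ∧ Even a ∧ d ≤ a))
    · have hrb : ruC k hi b d = b := by rw [ruC, if_neg h1, if_pos (hAB.mpr h2)]
      have hrc : ruC k hi c d = c := by rw [ruC, if_neg h1, if_pos h2]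
      rw [hrb, hrc]
      exact trunc_congr k b c B1 B3 B2
    · have h2b : ¬ ((Odd d ∧ ∀ i ≤ k, b i = none ∨ ∃ a, b i = some a ∧ d ≤ a)
         ∨ (Even d ∧ ∀ i ≤ k, ∃ a, b i = some a ∧ Even a ∧ d ≤ a)) := fun h => h2 (hAB.mp h)
      -- findGreatest for the "< d" predicate agree
      have hj0 : Nat.findGreatest (fun j' => ∃ a, b j' = some a ∧ a < d) k
          = Nat.findGreatest (fun j' => ∃ a, c j' = some a ∧ a < d) k := by
        set jb := Nat.findGreatest (fun j' => ∃ a, b j' = some a ∧ a < d) k with hjb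
        set jc := Nat.findGreatest (fun j' => ∃ a, c j' = some a ∧ a < d) k with hjc
        obtain ⟨hjbk, hjbP, _⟩ := (Nat.findGreatest_eq_iff).mp hjb.symm
        obtain ⟨hjck, hjcP, hjcmax⟩ := (Nat.findGreatest_eq_iff).mp hjc.symm
        apply le_antisymm
        · rcases Nat.eq_zero_or_pos jb with h | h
          · omega
          · obtain ⟨a, hba, hlt⟩ := hjbP (Nat.pos_iff_ne_zero.mp h)
            exact Nat.le_findGreatest hjbk ⟨a, B1 jb hjbk a hba, hlt⟩
        · rcases Nat.eq_zero_or_pos jc with h | h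
          · omega
          · obtain ⟨a, hca, hlt⟩ := hjcP (Nat.pos_iff_ne_zero.mp h)
            have hbjc : b jc = some a := by
              rw [hbc jc hjck]
              simp only [trunc, hca]
              rw [if_neg]
              rintro ⟨-, i', hji', hi'k, hci'⟩
              exact hjcmax hji' hi'k ⟨a, hci', hlt⟩
            exact Nat.le_findGreatest hjck ⟨a, hbjc, hlt⟩
      by_cases hod : Odd d
      · -- odd case
        set j := Nat.findGreatest (fun j' => ∃ a, c j' = some a ∧ a < d) k with hj
        have hrb : ruC k hi b d = fun i => if j < i then b i else if i = j ∧ j ≠ 0 then some d else none := by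
          rw [ruC, if_neg h1, if_neg h2b, if_pos hod]
          simp only [hj0]
        have hrc : ruC k hi c d = fun i => if j < i then c i else if i = j ∧ j ≠ 0 then some d else none := by
          rw [ruC, if_neg h1, if_neg h2, if_pos hod]
        rw [hrb, hrc]
        apply trunc_congr
        · intro i hik a hfa
          split at hfa
          · rw [if_pos (by assumption)]; exact B1 i hik a hfa
          · rw [if_neg (by assumption)]
            split at hfa
            · rw [if_pos (by assumption)]; exact hfa
            · exact absurd hfa (by simp)
        · intro i hik a hea hga
          split at hga
          · rw [if_pos (by assumption)]; exact B3 i hik a hea hga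
          · rw [if_neg (by assumption)]
            split at hga
            · rw [if_pos (by assumption)]; exact hga
            · exact absurd hga (by simp)
        · intro i hik a hoa hga
          split at hga
          · obtain ⟨i', hii', hi'k, hbi', hci'⟩ := B2 i hik a hoa hga
            have : j < i' := lt_of_lt_of_le (by assumption) hii'
            exact ⟨i', hii', hi'k, by rw [if_pos this]; exact hbi', by rw [if_pos this]; exact hci'⟩
          · split at hga
            · refine ⟨i, le_refl i, hik, ?_, ?_⟩ <;>
                rw [if_neg (by assumption), if_pos (by assumption)] <;> exact hga
            · exact absurd hga (by simp)
      · -- even case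
        have hev : Even d := Nat.not_odd_iff_even.mp hod
        have hj1 : (if h : ∃ j', j' ≤ k ∧ ¬ ∃ a, b j' = some a ∧ Even a then Nat.find h else 0)
            = (if h : ∃ j', j' ≤ k ∧ ¬ ∃ a, c j' = some a ∧ Even a then Nat.find h else 0) := by
          have hQ : ∀ j' ≤ k, ((¬ ∃ a, b j' = some a ∧ Even a) ↔ (¬ ∃ a, c j' = some a ∧ Even a)) := by
            intro j' hj'k
            constructor
            · intro h hc'; exact h (by obtain ⟨a, hca, hea⟩ := hc'; exact ⟨a, B3 j' hj'k a hea hca, hea⟩)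
            · intro h hb'; exact h (by obtain ⟨a, hba, hea⟩ := hb'; exact ⟨a, B1 j' hj'k a hba, hea⟩)
          by_cases hexb : ∃ j', j' ≤ k ∧ ¬ ∃ a, b j' = some a ∧ Even a
          · have hexc : ∃ j', j' ≤ k ∧ ¬ ∃ a, c j' = some a ∧ Even a := by
              obtain ⟨j', h1', h2'⟩ := hexb; exact ⟨j', h1', (hQ j' h1').mp h2'⟩
            rw [dif_pos hexb, dif_pos hexc]
            apply le_antisymm
            · have := Nat.find_spec hexc
              exact Nat.find_min' hexb ⟨this.1, (hQ _ this.1).mpr this.2⟩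
            · have := Nat.find_spec hexb
              exact Nat.find_min' hexc ⟨this.1, (hQ _ this.1).mp this.2⟩
          · have hexc : ¬ ∃ j', j' ≤ k ∧ ¬ ∃ a, c j' = some a ∧ Even a := by
              intro hexc
              obtain ⟨j', h1', h2'⟩ := hexc; exact hexb ⟨j', h1', (hQ j' h1').mpr h2'⟩
            rw [dif_neg hexb, dif_neg hexc]
        set j := max (Nat.findGreatest (fun j' => ∃ a, c j' = some a ∧ a < d) k)
            (if h : ∃ j', j' ≤ k ∧ ¬ ∃ a, c j' = some a ∧ Even a then Nat.find h else 0) with hj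
        have hrb : ruC k hi b d = fun i => if j < i then b i else if i = j then some d else none := by
          rw [ruC, if_neg h1, if_neg h2b, if_neg hod]
          simp only [hj0, hj1]
          rfl
        have hrc : ruC k hi c d = fun i => if j < i then c i else if i = j then some d else none := by
          rw [ruC, if_neg h1, if_neg h2, if_neg hod]
        rw [hrb, hrc]
        apply trunc_congr
        · intro i hik a hfa
          split at hfa
          · rw [if_pos (by assumption)]; exact B1 i hik a hfa
          · rw [if_neg (by assumption)]
            split at hfa
            · rw [if_pos (by assumption)]; exact hfa
            · exact absurd hfa (by simp)
        · intro i hik a hea hga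
          split at hga
          · rw [if_pos (by assumption)]; exact B3 i hik a hea hga
          · rw [if_neg (by assumption)]
            split at hga
            · rw [if_pos (by assumption)]; exact hga
            · exact absurd hga (by simp)
        · intro i hik a hoa hga
          split at hga
          · obtain ⟨i', hii', hi'k, hbi', hci'⟩ := B2 i hik a hoa hga
            have : j < i' := lt_of_lt_of_le (by assumption) hii'
            exact ⟨i', hii', hi'k, by rw [if_pos this]; exact hbi', by rw [if_pos this]; exact hci'⟩
          · split at hga
            · exact absurd (by rwa [← Option.some.inj hga] at hoa) hod
            · exact absurd hga (by simp)
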